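/- If H₁ and H₂ are subgroups of a group G with a fixed finite generating set, and T₁, T₂, T are minimal Schreier transversals (sets of coset representatives of minimal word length) for H₁, H₂, and H₁ ∩ H₂ respectively, then for every n the number of elements of T of length ≤ n is at most the product of the number of elements of T₁ of length ≤ n and the number of elements of T₂ of length ≤ n; i.e., Γ_{G/(H₁∩H₂)}(n) ≤ Γ_{G/H₁}(n) · Γ_{G/H₂}(n). -/
import Mathlib


/-- The ball of radius `n` in `G` with respect to the generating set `S`
(words of length at most `n` in `S ∪ S⁻¹`). -/
def wordBall {G : Type*} [Group G] (S : Set G) (n : ℕ) : Set G :=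
  {g | ∃ l : List G, l.length ≤ n ∧ (∀ x ∈ l, x ∈ S ∨ x⁻¹ ∈ S) ∧ l.prod = g}

/-- The word length of `g` with respect to the generating set `S`. -/
noncomputable def wordLength {G : Type*} [Group G] (S : Set G) (g : G) : ℕ :=
  sInf {n | g ∈ wordBall S n}

/-- The growth function of `G` with respect to `S`. -/
noncomputable def growth {G : Type*} [Group G] (S : Set G) (n : ℕ) : ℕ :=
  (wordBall S n).ncard

/-- The cogrowth function of a subgroup `H ≤ G`: the number of right cosets `Hg`
containing an element of word length at most `n`. -/
noncomputable def cogrowth {G : Type*} [Group G] (S : Set G) (H : Subgroup G) (n : ℕ) : ℕ :=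
  ((fun g => Quotient.mk (QuotientGroup.rightRel H) g) '' wordBall S n).ncard

/-- A subgroup is essential if it intersects every nontrivial subgroup nontrivially. -/
def Essential {G : Type*} [Group G] (H : Subgroup G) : Prop :=
  ∀ K : Subgroup G, K ≠ ⊥ → H ⊓ K ≠ ⊥


theorem wordBall_finite {G : Type*} [Group G] {S : Set G} (hS : S.Finite) (n : ℕ) :
    (wordBall S n).Finite := by
  have hT : (S ∪ S⁻¹).Finite := hS.union hS.inv
  have : Finite (S ∪ S⁻¹ : Set G) := hT.to_subtype
  have hfin : {l : List (S ∪ S⁻¹ : Set G) | l.length ≤ n}.Finite :=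
    List.finite_length_le _ n
  apply (hfin.image (fun l => (l.map Subtype.val).prod)).subset
  rintro g ⟨l, hlen, hmem, rfl⟩
  have hmem' : ∀ x ∈ l, x ∈ (S ∪ S⁻¹ : Set G) := by
    intro x hx
    rcases hmem x hx with h | h
    · exact Or.inl h
    · exact Or.inr (Set.mem_inv.mpr h)
  refine ⟨l.pmap (fun x hx => (⟨x, hx⟩ : (S ∪ S⁻¹ : Set G))) hmem', by simp [hlen], ?_⟩
  simp [List.map_pmap]

theorem ncard_prod_aux {α β : Type*} (s : Set α) (t : Set β) :
    (s ×ˢ t).ncard = s.ncard * t.ncard := by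
  rw [← Nat.card_coe_set_eq, ← Nat.card_coe_set_eq, ← Nat.card_coe_set_eq,
    ← Nat.card_prod]
  exact Nat.card_congr (Equiv.Set.prod s t)

/-- The cogrowth of the intersection of two subgroups is bounded by the product
of the cogrowths. -/
theorem cogrowth_inf_le {G : Type*} [Group G] (S : Set G) (hS : S.Finite)
    (hgen : Subgroup.closure S = ⊤) (H₁ H₂ : Subgroup G) (n : ℕ) :
    cogrowth S (H₁ ⊓ H₂) n ≤ cogrowth S H₁ n * cogrowth S H₂ n := by
    classical
  have hB := wordBall_finite hS n
  set B := wordBall S n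
  set m₁ : G → Quotient (QuotientGroup.rightRel H₁) :=
    fun g => Quotient.mk (QuotientGroup.rightRel H₁) g
  set m₂ : G → Quotient (QuotientGroup.rightRel H₂) :=
    fun g => Quotient.mk (QuotientGroup.rightRel H₂) g
  have hresp : ∀ a b : G, (QuotientGroup.rightRel (H₁ ⊓ H₂)).r a b →
      (m₁ a, m₂ a) = (m₁ b, m₂ b) := by
    intro a b hab
    rw [QuotientGroup.rightRel_apply] at hab
    exact Prod.ext (Quotient.sound ((QuotientGroup.rightRel_apply).mpr hab.1))
      (Quotient.sound ((QuotientGroup.rightRel_apply).mpr hab.2))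
  set f : Quotient (QuotientGroup.rightRel (H₁ ⊓ H₂)) →
      Quotient (QuotientGroup.rightRel H₁) × Quotient (QuotientGroup.rightRel H₂) :=
    Quotient.lift (fun g => (m₁ g, m₂ g)) hresp
  have hle : ((fun g => Quotient.mk (QuotientGroup.rightRel (H₁ ⊓ H₂)) g) '' B).ncard ≤
      ((m₁ '' B) ×ˢ (m₂ '' B)).ncard := by
    refine Set.ncard_le_ncard_of_injOn f ?_ ?_ ((hB.image m₁).prod (hB.image m₂))
    · rintro q ⟨g, hg, rfl⟩
      exact ⟨⟨g, hg, rfl⟩, ⟨g, hg, rfl⟩⟩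
    · rintro q₁ - q₂ - h
      obtain ⟨a, rfl⟩ := Quotient.exists_rep q₁
      obtain ⟨b, rfl⟩ := Quotient.exists_rep q₂
      simp only [f, Quotient.lift_mk, Prod.mk.injEq] at h
      have h1 : b * a⁻¹ ∈ H₁ := QuotientGroup.rightRel_apply.mp (Quotient.exact h.1)
      have h2 : b * a⁻¹ ∈ H₂ := QuotientGroup.rightRel_apply.mp (Quotient.exact h.2)
      exact Quotient.sound (QuotientGroup.rightRel_apply.mpr ⟨h1, h2⟩)
  calc cogrowth S (H₁ ⊓ H₂) n ≤ ((m₁ '' B) ×ˢ (m₂ '' B)).ncard := hle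
    _ = cogrowth S H₁ n * cogrowth S H₂ n := ncard_prod_aux _ _
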